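/- Let s, x ∈ ℂ with s² = 5, x a root of unity of order dividing 2D for some positive integer D, and set a = (s + 1)·x. Then s ∈ ℚ(a). Consequently x ∈ ℚ(a), so ℚ(a) = ℚ(s, x). -/

import Mathlib

open IntermediateField

/-- Coefficients of `(6+2s)^n = A n + B n * s` where `s^2 = 5`. -/
def stmt4AB : ℕ → ℕ × ℕ
  | 0 => (1, 0)
  | n + 1 => (6 * (stmt4AB n).1 + 10 * (stmt4AB n).2,
              2 * (stmt4AB n).1 + 6 * (stmt4AB n).2)

lemma stmt4AB_eq (s : ℂ) (hs : s ^ 2 = 5) (n : ℕ) :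
    (6 + 2 * s) ^ n = ((stmt4AB n).1 : ℂ) + ((stmt4AB n).2 : ℂ) * s := by
  induction n with
  | zero => simp [stmt4AB]
  | succ n ih =>
      have : (6 + 2 * s) ^ (n + 1) = (6 + 2 * s) ^ n * (6 + 2 * s) := pow_succ _ _
      rw [this, ih]
      simp only [stmt4AB, Nat.cast_add, Nat.cast_mul, Nat.cast_ofNat]
      linear_combination (2 * ((stmt4AB n).2 : ℂ)) * hs

lemma stmt4AB_fst_pos (n : ℕ) : 0 < (stmt4AB n).1 := by
  induction n with
  | zero => simp [stmt4AB]
  | succ n ih => simp only [stmt4AB]; omega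

lemma stmt4AB_snd_pos (n : ℕ) (hn : 0 < n) : 0 < (stmt4AB n).2 := by
  cases n with
  | zero => omega
  | succ n => have := stmt4AB_fst_pos n; simp only [stmt4AB]; omega

/-- If `s² = 5`, `x` is a root of unity of order dividing `2D`, and
`a = (s+1)x`, then `s ∈ ℚ(a)`, `x ∈ ℚ(a)`, and `ℚ(a) = ℚ(s, x)`. -/
theorem stmt4 (s x : ℂ) (hs : s ^ 2 = 5) (D : ℕ) (hD : 0 < D)
    (hx : x ^ (2 * D) = 1) :
    s ∈ IntermediateField.adjoin ℚ {(s + 1) * x} ∧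
    x ∈ IntermediateField.adjoin ℚ {(s + 1) * x} ∧
    IntermediateField.adjoin ℚ {(s + 1) * x}
      = IntermediateField.adjoin ℚ {s, x} := by
  set a := (s + 1) * x with ha
  set K := IntermediateField.adjoin ℚ {a} with hK
  have haK : a ∈ K := IntermediateField.mem_adjoin_simple_self ℚ a
  have h1 : a ^ (2 * D) = (6 + 2 * s) ^ D := by
    have h2 : (s + 1) ^ 2 = 6 + 2 * s := by linear_combination hs
    calc a ^ (2 * D) = ((s + 1) ^ 2) ^ D * x ^ (2 * D) := by
          rw [ha, mul_pow, ← pow_mul]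
      _ = (6 + 2 * s) ^ D := by rw [hx, h2, mul_one]
  set A := (stmt4AB D).1 with hA
  set B := (stmt4AB D).2 with hB
  have hBpos : 0 < B := stmt4AB_snd_pos D hD
  have hBne : (B : ℂ) ≠ 0 := Nat.cast_ne_zero.mpr hBpos.ne'
  have h3 : a ^ (2 * D) = (A : ℂ) + (B : ℂ) * s := by
    rw [h1]; exact stmt4AB_eq s hs D
  have hseq : s = ((B : ℂ))⁻¹ * (a ^ (2 * D) - (A : ℂ)) := by
    rw [h3]; field_simp; ring
  have hsK : s ∈ K := by
    rw [hseq]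
    exact mul_mem (inv_mem (_root_.natCast_mem K B))
      (sub_mem (pow_mem haK _) (_root_.natCast_mem K A))
  have hs1 : s + 1 ≠ 0 := by
    intro h
    have : s = -1 := by linear_combination h
    rw [this] at hs; norm_num at hs
  have hxeq : x = a * (s + 1)⁻¹ := by
    rw [ha]; field_simp
  have hxK : x ∈ K := by
    rw [hxeq]
    exact mul_mem haK (inv_mem (add_mem hsK (one_mem K)))
  refine ⟨hsK, hxK, le_antisymm ?_ ?_⟩
  · rw [IntermediateField.adjoin_le_iff, Set.singleton_subset_iff]
    exact mul_mem
      (add_mem (IntermediateField.subset_adjoin ℚ _ (Set.mem_insert s {x}))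
        (one_mem _))
      (IntermediateField.subset_adjoin ℚ _ (Set.mem_insert_of_mem s rfl))
  · rw [IntermediateField.adjoin_le_iff]
    rintro y (rfl | rfl)
    · exact hsK
    · exact hxK
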